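/- For every real x, the Euler polynomial matrix 𝓔(x + 1/2) is invertible and its inverse is [𝓔(x + 1/2)]^{−1} = 𝓓·P[−x]; in particular, the Euler matrix 𝓔 is invertible with 𝓔^{−1} = 𝓓·P[1/2]. -/

import Mathlib

noncomputable section

/-- `Eu x k` is the Euler polynomial `E_k(x)`, characterized by the generating function
`(2/(e^z+1)) e^{xz} = Σ_k E_k(x) z^k / k!` for `|z| < π`. -/
def IsEulerFamily (Eu : ℝ → ℕ → ℝ) : Prop :=
  ∀ x z : ℝ, |z| < Real.pi →
    HasSum (fun k : ℕ => Eu x k * z ^ k / (Nat.factorial k : ℝ))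
      (2 / (Real.exp z + 1) * Real.exp (x * z))

/-- The `(n+1)×(n+1)` Euler polynomial matrix `𝓔(x)`, with `(i,j)` entry
`C(i,j) E_{i-j}(x)` (which is `0` for `j > i` since then `C(i,j) = 0`). -/
def eulerMatrix (Eu : ℝ → ℕ → ℝ) (n : ℕ) (x : ℝ) :
    Matrix (Fin (n + 1)) (Fin (n + 1)) ℝ :=
  Matrix.of fun i j => (Nat.choose (i : ℕ) (j : ℕ) : ℝ) * Eu x ((i : ℕ) - (j : ℕ))

/-- The generalized Pascal matrix of the first kind `P[x]`. -/
def pascalMatrix (n : ℕ) (x : ℝ) : Matrix (Fin (n + 1)) (Fin (n + 1)) ℝ :=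
  Matrix.of fun i j => (Nat.choose (i : ℕ) (j : ℕ) : ℝ) * x ^ ((i : ℕ) - (j : ℕ))

/-- The matrix `𝓓`, with `(i,j)` entry `(1+(-1)^(i-j)) C(i,j) 2^(j-i-1)`
(which is `0` for `j > i` since then `C(i,j) = 0`). -/
def Dmatrix (n : ℕ) : Matrix (Fin (n + 1)) (Fin (n + 1)) ℝ :=
  Matrix.of fun i j =>
    (1 + (-1 : ℝ) ^ ((i : ℤ) - (j : ℤ))) * (Nat.choose (i : ℕ) (j : ℕ) : ℝ) *
      (2 : ℝ) ^ ((j : ℤ) - (i : ℤ) - 1)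

namespace EulerMatAux

open Finset

/-- Binomial convolution of two sequences. -/
def bconv (a b : ℕ → ℝ) : ℕ → ℝ :=
  fun k => ∑ m ∈ Finset.range (k + 1), (k.choose m : ℝ) * a (k - m) * b m

/-- The Kronecker-delta sequence. -/
def delta : ℕ → ℝ := fun k => if k = 0 then 1 else 0

/-- The lower-triangular "binomial Toeplitz" matrix attached to a sequence. -/
def binMat (n : ℕ) (a : ℕ → ℝ) : Matrix (Fin (n + 1)) (Fin (n + 1)) ℝ :=
  Matrix.of fun i j => ((i : ℕ).choose (j : ℕ) : ℝ) * a ((i : ℕ) - (j : ℕ))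

lemma key (a b : ℕ → ℝ) (N i j : ℕ) (hi : i ≤ N) :
    ∑ k ∈ Finset.range (N + 1),
      (i.choose k : ℝ) * a (i - k) * ((k.choose j : ℝ) * b (k - j))
      = (i.choose j : ℝ) * bconv a b (i - j) := by
  by_cases hji : j ≤ i
  · have hsub : Finset.Ico j (i + 1) ⊆ Finset.range (N + 1) := by
      intro k hk; simp only [Finset.mem_Ico, Finset.mem_range] at *; omega
    rw [← Finset.sum_subset hsub (fun k hk hk' => ?_)]
    · rw [Finset.sum_Ico_eq_sum_range]
      have hcount : i + 1 - j = i - j + 1 := by omega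
      rw [hcount, bconv, Finset.mul_sum]
      refine Finset.sum_congr rfl (fun m hm => ?_)
      have hm' : m ≤ i - j := by simpa [Nat.lt_succ_iff] using hm
      have h1 : i - (j + m) = i - j - m := by omega
      have h2 : j + m - j = m := by omega
      have hcc : (i.choose (j + m) : ℝ) * ((j + m).choose j : ℝ)
          = (i.choose j : ℝ) * ((i - j).choose m : ℝ) := by
        have := Nat.choose_mul (n := i) (k := j + m) (s := j) (by omega)
        rw [h2] at this
        exact_mod_cast congrArg (Nat.cast : ℕ → ℝ) this
      rw [h1, h2]
      linear_combination (a (i - j - m) * b m) * hcc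
    · simp only [Finset.mem_Ico, not_and, not_lt] at hk'
      rcases le_or_gt k i with h | h
      · have : k < j := by
          rcases lt_or_ge k j with h' | h'
          · exact h'
          · omega
        rw [Nat.choose_eq_zero_of_lt this]; ring
      · rw [Nat.choose_eq_zero_of_lt h]; ring
  · rw [Nat.choose_eq_zero_of_lt (not_le.mp hji), Nat.cast_zero, zero_mul]
    refine Finset.sum_eq_zero (fun k _ => ?_)
    rcases le_or_gt k i with h | h
    · rw [Nat.choose_eq_zero_of_lt (lt_of_le_of_lt h (not_le.mp hji))]; ring
    · rw [Nat.choose_eq_zero_of_lt h]; ring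

lemma binMat_mul (n : ℕ) (a b : ℕ → ℝ) :
    binMat n a * binMat n b = binMat n (bconv a b) := by
  ext i j
  rw [Matrix.mul_apply]
  simp only [binMat, Matrix.of_apply]
  rw [Fin.sum_univ_eq_sum_range
    (fun k => ((i : ℕ).choose k : ℝ) * a ((i : ℕ) - k) *
      ((k.choose (j : ℕ) : ℝ) * b (k - (j : ℕ)))) (n + 1)]
  exact key a b n i j (Nat.lt_succ_iff.mp i.isLt)

lemma binMat_delta (n : ℕ) : binMat n delta = 1 := by
  ext i j
  simp only [binMat, Matrix.of_apply, Matrix.one_apply, delta]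
  rcases lt_trichotomy (i : ℕ) (j : ℕ) with h | h | h
  · have hne : i ≠ j := fun hij => by rw [hij] at h; omega
    rw [Nat.choose_eq_zero_of_lt h, if_neg hne]
    ring
  · have : i = j := Fin.ext h
    simp [this, Nat.sub_self]
  · have hne : i ≠ j := fun hij => by rw [hij] at h; omega
    rw [if_neg (by omega : ¬ (i : ℕ) - (j : ℕ) = 0), if_neg hne]
    ring

lemma hexp (y : ℝ) : HasSum (fun n : ℕ => y ^ n / (Nat.factorial n : ℝ)) (Real.exp y) := by
  rw [Real.exp_eq_exp_ℝ]
  exact NormedSpace.expSeries_div_hasSum_exp y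

/-- Cauchy product for exponential generating functions. -/
lemma egf_bconv {a b : ℕ → ℝ} {z A B : ℝ}
    (ha : HasSum (fun k : ℕ => a k * z ^ k / (Nat.factorial k : ℝ)) A)
    (hb : HasSum (fun k : ℕ => b k * z ^ k / (Nat.factorial k : ℝ)) B) :
    HasSum (fun k : ℕ => bconv a b k * z ^ k / (Nat.factorial k : ℝ)) (A * B) := by
  set f : ℕ → ℝ := fun k => a k * z ^ k / (Nat.factorial k : ℝ) with hf
  set g : ℕ → ℝ := fun k => b k * z ^ k / (Nat.factorial k : ℝ) with hg
  have hfn : Summable fun k => ‖f k‖ := ha.summable.norm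
  have hgn : Summable fun k => ‖g k‖ := hb.summable.norm
  have hS : Summable fun n => ∑ k ∈ Finset.range (n + 1), f k * g (n - k) :=
    summable_sum_mul_range_of_summable_norm' hfn ha.summable hgn hb.summable
  have htsum : ((∑' n, f n) * ∑' n, g n) = ∑' n, ∑ k ∈ Finset.range (n + 1), f k * g (n - k) :=
    tsum_mul_tsum_eq_tsum_sum_range_of_summable_norm hfn hgn
  have hval : HasSum (fun n => ∑ k ∈ Finset.range (n + 1), f k * g (n - k)) (A * B) := by
    have := hS.hasSum
    rwa [← htsum, ha.tsum_eq, hb.tsum_eq] at this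
  have hfun : ∀ n : ℕ, bconv a b n * z ^ n / (Nat.factorial n : ℝ)
      = ∑ k ∈ Finset.range (n + 1), f k * g (n - k) := by
    intro n
    have step1 : bconv a b n * z ^ n / (Nat.factorial n : ℝ)
        = ∑ m ∈ Finset.range (n + 1), f (n - m) * g m := by
      rw [bconv, Finset.sum_mul, Finset.sum_div]
      refine Finset.sum_congr rfl (fun m hm => ?_)
      have hm' : m ≤ n := by simpa [Nat.lt_succ_iff] using hm
      have hfact : ((n.choose m : ℝ)) * (Nat.factorial m : ℝ) * (Nat.factorial (n - m) : ℝ)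
          = (Nat.factorial n : ℝ) := by
        exact_mod_cast congrArg (Nat.cast : ℕ → ℝ)
          (Nat.choose_mul_factorial_mul_factorial hm')
      have hzpow : z ^ (n - m) * z ^ m = z ^ n := pow_sub_mul_pow z hm'
      have hne2 : (Nat.factorial m : ℝ) ≠ 0 := by positivity
      have hne3 : (Nat.factorial (n - m) : ℝ) ≠ 0 := by positivity
      have hC : ((n.choose m : ℕ) : ℝ) ≠ 0 := Nat.cast_ne_zero.mpr (Nat.choose_pos hm').ne'
      simp only [hf, hg]
      rw [← hfact, ← hzpow]
      field_simp
    rw [step1]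
    rw [← Finset.sum_range_reflect (fun m => f (n - m) * g m) (n + 1)]
    refine Finset.sum_congr rfl (fun k hk => ?_)
    have hk' : k ≤ n := by simpa [Nat.lt_succ_iff] using hk
    have h1 : n + 1 - 1 - k = n - k := by omega
    have h2 : n - (n - k) = k := by omega
    rw [h1, h2]
  exact (funext hfun : (fun k => bconv a b k * z ^ k / (Nat.factorial k : ℝ)) = _) ▸ hval

/-- Uniqueness of power series coefficients: a power series summing to `0` on a
neighbourhood of `0` has all coefficients `0`. -/
lemma coeff_eq_zero {q : ℕ → ℝ} {r : ℝ} (hr : 0 < r)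
    (h : ∀ z : ℝ, |z| < r → HasSum (fun k => q k * z ^ k) 0) : ∀ k, q k = 0 := by
  set p := FormalMultilinearSeries.ofScalars ℝ q with hp
  have hhalf : |r / 2| < r := by rw [abs_of_pos (by linarith)]; linarith
  have hsum2 : Summable fun k => ‖q k * (r / 2) ^ k‖ := (h (r / 2) hhalf).summable.norm
  have hrad : ENNReal.ofReal (r / 2) ≤ p.radius := by
    have : Summable fun k => ‖p k‖ * ((r / 2).toNNReal : ℝ) ^ k := by
      refine hsum2.congr fun k => ?_
      rw [norm_mul, norm_pow, Real.norm_eq_abs, Real.norm_eq_abs,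
        abs_of_pos (by linarith : (0:ℝ) < r / 2),
        Real.coe_toNNReal _ (by linarith : (0:ℝ) ≤ r / 2),
        FormalMultilinearSeries.ofScalars_norm, Real.norm_eq_abs]
    have := p.le_radius_of_summable_norm this
    simpa [ENNReal.ofReal] using this
  have hball : HasFPowerSeriesOnBall (0 : ℝ → ℝ) p 0 (ENNReal.ofReal (r / 2)) := by
    refine ⟨hrad, ENNReal.ofReal_pos.mpr (by linarith), fun {y} hy => ?_⟩
    have hy' : |y| < r / 2 := by
      rw [EMetric.mem_ball, edist_dist] at hy
      have := (ENNReal.ofReal_lt_ofReal_iff (by linarith)).mp hy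
      rwa [Real.dist_eq, sub_zero] at this
    have hys := h y (lt_trans hy' (by linarith))
    have heq : (fun n => p n fun _ => y) = fun n => q n * y ^ n :=
      funext fun n => by rw [hp, FormalMultilinearSeries.ofScalars_apply_eq, smul_eq_mul]
    rw [heq]
    simpa using hys
  have hp0 : p = 0 := hball.hasFPowerSeriesAt.eq_zero
  rw [hp] at hp0
  have hq0 : q = 0 := (FormalMultilinearSeries.ofScalars_series_eq_zero ℝ).mp hp0
  exact fun k => congrFun hq0 k

/-- A sequence whose exponential generating function is `1` near `0` is the delta sequence. -/
lemma conv_eq_delta {c : ℕ → ℝ}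
    (h : ∀ z : ℝ, |z| < Real.pi →
      HasSum (fun k : ℕ => c k * z ^ k / (Nat.factorial k : ℝ)) 1) :
    c = delta := by
  have hq : ∀ k, (c k - delta k) / (Nat.factorial k : ℝ) = 0 := by
    apply coeff_eq_zero Real.pi_pos
    intro z hz
    have h1 := h z hz
    have h2 : HasSum (fun k : ℕ => delta k / (Nat.factorial k : ℝ) * z ^ k) 1 := by
      have := hasSum_single (f := fun k : ℕ => delta k / (Nat.factorial k : ℝ) * z ^ k) 0
        (fun b hb => by simp [delta, hb])
      simpa [delta] using this
    have h1' : HasSum (fun k : ℕ => c k / (Nat.factorial k : ℝ) * z ^ k) 1 := by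
      have hfun : (fun k : ℕ => c k * z ^ k / (Nat.factorial k : ℝ))
          = fun k : ℕ => c k / (Nat.factorial k : ℝ) * z ^ k := funext fun k => by ring
      rwa [hfun] at h1
    have h3 := h1'.sub h2
    rw [sub_self] at h3
    have hfun2 : (fun k : ℕ => c k / (Nat.factorial k : ℝ) * z ^ k
        - delta k / (Nat.factorial k : ℝ) * z ^ k)
        = fun k : ℕ => (c k - delta k) / (Nat.factorial k : ℝ) * z ^ k :=
      funext fun k => by ring
    rwa [hfun2] at h3
  funext k
  have hk : (Nat.factorial k : ℝ) ≠ 0 := by positivity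
  exact sub_eq_zero.mp ((div_eq_zero_iff.mp (hq k)).resolve_right hk)

/-- The sequence underlying `Dmatrix`. -/
def dseq : ℕ → ℝ := fun k => (1 + (-1 : ℝ) ^ k) * (2 : ℝ) ^ (-(k : ℤ) - 1)

lemma hasSum_dseq (z : ℝ) :
    HasSum (fun k : ℕ => dseq k * z ^ k / (Nat.factorial k : ℝ))
      ((Real.exp (z / 2) + Real.exp (-(z / 2))) / 2) := by
  have h3 := ((hexp (z / 2)).add (hexp (-(z / 2)))).div_const 2
  have hfun : (fun k : ℕ => ((z / 2) ^ k / (Nat.factorial k : ℝ)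
      + (-(z / 2)) ^ k / (Nat.factorial k : ℝ)) / 2)
      = fun k : ℕ => dseq k * z ^ k / (Nat.factorial k : ℝ) := by
    funext k
    have h2p : (2 : ℝ) ^ (-(k : ℤ) - 1) = ((2 : ℝ) ^ k)⁻¹ * 2⁻¹ := by
      rw [zpow_sub₀ (two_ne_zero), zpow_neg, zpow_natCast, zpow_one, div_eq_mul_inv]
    have hneg : (-(z / 2)) ^ k = (-1 : ℝ) ^ k * (z / 2) ^ k := by
      rw [neg_pow]
    have hdiv : (z / 2) ^ k = z ^ k / 2 ^ k := div_pow z 2 k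
    have hk : (Nat.factorial k : ℝ) ≠ 0 := by positivity
    have h2k : ((2 : ℝ) ^ k) ≠ 0 := by positivity
    rw [dseq, h2p, hneg, hdiv]
    field_simp
  rwa [hfun] at h3

lemma hasSum_pseq (c z : ℝ) :
    HasSum (fun k : ℕ => c ^ k * z ^ k / (Nat.factorial k : ℝ)) (Real.exp (c * z)) := by
  have h := hexp (c * z)
  have hfun : (fun k : ℕ => (c * z) ^ k / (Nat.factorial k : ℝ))
      = fun k : ℕ => c ^ k * z ^ k / (Nat.factorial k : ℝ) := by
    funext k; rw [mul_pow]
  rwa [hfun] at h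

lemma value_eq_one (x z : ℝ) :
    2 / (Real.exp z + 1) * Real.exp ((x + 1 / 2) * z) *
      ((Real.exp (z / 2) + Real.exp (-(z / 2))) / 2 * Real.exp (-x * z)) = 1 := by
  have hpos : (0 : ℝ) < Real.exp z + 1 := by positivity
  have key : Real.exp ((x + 1 / 2) * z) * Real.exp (-x * z) = Real.exp (z / 2) := by
    rw [← Real.exp_add]; congr 1; ring
  have key2 : Real.exp (z / 2) * (Real.exp (z / 2) + Real.exp (-(z / 2)))
      = Real.exp z + 1 := by
    rw [mul_add, ← Real.exp_add, ← Real.exp_add,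
      show z / 2 + z / 2 = z by ring, show z / 2 + -(z / 2) = (0 : ℝ) by ring, Real.exp_zero]
  have hstep : 2 / (Real.exp z + 1) * Real.exp ((x + 1 / 2) * z) *
      ((Real.exp (z / 2) + Real.exp (-(z / 2))) / 2 * Real.exp (-x * z)) =
      Real.exp ((x + 1 / 2) * z) * Real.exp (-x * z) *
        (Real.exp (z / 2) + Real.exp (-(z / 2))) / (Real.exp z + 1) := by
    field_simp
  rw [hstep, key, key2, div_self hpos.ne']

lemma main_conv {Eu : ℝ → ℕ → ℝ} (hEu : IsEulerFamily Eu) (x : ℝ) :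
    bconv (Eu (x + 1 / 2)) (bconv dseq (fun k => (-x) ^ k)) = delta ∧
    bconv (bconv dseq (fun k => (-x) ^ k)) (Eu (x + 1 / 2)) = delta := by
  have base : ∀ z : ℝ, |z| < Real.pi →
      HasSum (fun k : ℕ => Eu (x + 1 / 2) k * z ^ k / (Nat.factorial k : ℝ))
        (2 / (Real.exp z + 1) * Real.exp ((x + 1 / 2) * z)) := fun z hz => hEu (x + 1 / 2) z hz
  constructor
  · refine conv_eq_delta fun z hz => ?_
    have h1 := egf_bconv (base z hz) (egf_bconv (hasSum_dseq z) (hasSum_pseq (-x) z))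
    rwa [value_eq_one x z] at h1
  · refine conv_eq_delta fun z hz => ?_
    have h1 := egf_bconv (egf_bconv (hasSum_dseq z) (hasSum_pseq (-x) z)) (base z hz)
    rw [mul_comm] at h1
    rwa [value_eq_one x z] at h1



lemma euler_eq (Eu : ℝ → ℕ → ℝ) (n : ℕ) (x : ℝ) :
    eulerMatrix Eu n x = binMat n (Eu x) := rfl

lemma pascal_eq (n : ℕ) (x : ℝ) :
    pascalMatrix n x = binMat n (fun k => x ^ k) := rfl

lemma D_eq (n : ℕ) : Dmatrix n = binMat n dseq := by
  ext i j
  simp only [Dmatrix, binMat, Matrix.of_apply, dseq]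
  rcases le_or_gt (j : ℕ) (i : ℕ) with h | h
  · have h1 : (i : ℤ) - (j : ℤ) = (((i : ℕ) - (j : ℕ) : ℕ) : ℤ) := by omega
    have h2 : (j : ℤ) - (i : ℤ) - 1 = -(((i : ℕ) - (j : ℕ) : ℕ) : ℤ) - 1 := by omega
    rw [h1, h2, zpow_natCast]
    ring
  · rw [Nat.choose_eq_zero_of_lt h, Nat.cast_zero]
    ring

lemma inv_pair {Eu : ℝ → ℕ → ℝ} (hEu : IsEulerFamily Eu) (n : ℕ) (x : ℝ) :
    eulerMatrix Eu n (x + 1 / 2) * (Dmatrix n * pascalMatrix n (-x)) = 1 ∧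
    (Dmatrix n * pascalMatrix n (-x)) * eulerMatrix Eu n (x + 1 / 2) = 1 := by
  obtain ⟨hc1, hc2⟩ := main_conv hEu x
  rw [euler_eq, pascal_eq, D_eq, binMat_mul, binMat_mul, binMat_mul, hc1, hc2, binMat_delta]
  exact ⟨rfl, rfl⟩

end EulerMatAux

theorem euler_poly_matrix_inverse (Eu : ℝ → ℕ → ℝ) (hEu : IsEulerFamily Eu)
    (n : ℕ) (x : ℝ) :
    (eulerMatrix Eu n (x + 1 / 2) * (Dmatrix n * pascalMatrix n (-x)) = 1 ∧
     (Dmatrix n * pascalMatrix n (-x)) * eulerMatrix Eu n (x + 1 / 2) = 1) ∧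
    (eulerMatrix Eu n 0 * (Dmatrix n * pascalMatrix n (1 / 2)) = 1 ∧
     (Dmatrix n * pascalMatrix n (1 / 2)) * eulerMatrix Eu n 0 = 1) := by
  refine ⟨EulerMatAux.inv_pair hEu n x, ?_⟩
  have h := EulerMatAux.inv_pair hEu n (-(1 / 2))
  rw [show -(1 / 2 : ℝ) + 1 / 2 = 0 by norm_num, show -(-(1 / 2 : ℝ)) = 1 / 2 by norm_num] at h
  exact h
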